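/- Scalar invariant-region lemma: let Ψ₁, Ψ₂: ℝ² → ℝ be Lipschitz and non-increasing in each argument separately, and let u_l < u_r, v_l < v_r be reals satisfying Ψ₁(u_r, v_l) ≤ 0 ≤ Ψ₂(u_r, v_l) and Ψ₂(u_l, v_r) ≤ 0 ≤ Ψ₁(u_l, v_r). Let (u, v): [0,T] → ℝ² be a C¹ solution of the ODE system u' = Ψ₁(u,v), v' = Ψ₂(u,v) with u(0) ∈ [u_l, u_r] and v(0) ∈ [v_l, v_r]. Then u(t) ∈ [u_l, u_r] and v(t) ∈ [v_l, v_r] for all t ∈ [0,T]. -/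

import Mathlib

private lemma psi_upper {Ψ : ℝ → ℝ → ℝ} {K : ℝ}
    (hlip : ∀ a b a' b' : ℝ, |Ψ a b - Ψ a' b'| ≤ K * (|a - a'| + |b - b'|))
    (hA : ∀ b, Antitone (fun a => Ψ a b)) (hB : ∀ a, Antitone (Ψ a))
    (a b a₀ b₀ : ℝ) :
    Ψ a b ≤ Ψ a₀ b₀ + K * (max (a₀ - a) 0 + max (b₀ - b) 0) := by
  have h1 : Ψ a b ≤ Ψ (min a a₀) (min b b₀) := by
    calc Ψ a b ≤ Ψ a (min b b₀) := hB a (min_le_left b b₀)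
    _ ≤ Ψ (min a a₀) (min b b₀) := hA (min b b₀) (min_le_left a a₀)
  have h2 := hlip (min a a₀) (min b b₀) a₀ b₀
  have e1 : |min a a₀ - a₀| = max (a₀ - a) 0 := by
    rcases le_total a a₀ with h | h
    · rw [min_eq_left h, max_eq_left (by linarith), abs_of_nonpos (by linarith)]; ring
    · rw [min_eq_right h, max_eq_right (by linarith)]; simp
  have e2 : |min b b₀ - b₀| = max (b₀ - b) 0 := by
    rcases le_total b b₀ with h | h
    · rw [min_eq_left h, max_eq_left (by linarith), abs_of_nonpos (by linarith)]; ring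
    · rw [min_eq_right h, max_eq_right (by linarith)]; simp
  rw [e1, e2] at h2
  have := abs_le.1 h2
  linarith [h1, this.2]

private lemma psi_lower {Ψ : ℝ → ℝ → ℝ} {K : ℝ}
    (hlip : ∀ a b a' b' : ℝ, |Ψ a b - Ψ a' b'| ≤ K * (|a - a'| + |b - b'|))
    (hA : ∀ b, Antitone (fun a => Ψ a b)) (hB : ∀ a, Antitone (Ψ a))
    (a b a₀ b₀ : ℝ) :
    Ψ a₀ b₀ - K * (max (a - a₀) 0 + max (b - b₀) 0) ≤ Ψ a b := by
  have h1 : Ψ (max a a₀) (max b b₀) ≤ Ψ a b := by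
    calc Ψ (max a a₀) (max b b₀) ≤ Ψ a (max b b₀) := hA (max b b₀) (le_max_left a a₀)
    _ ≤ Ψ a b := hB a (le_max_left b b₀)
  have h2 := hlip (max a a₀) (max b b₀) a₀ b₀
  have e1 : |max a a₀ - a₀| = max (a - a₀) 0 := by
    rcases le_total a a₀ with h | h
    · rw [max_eq_right h, max_eq_right (by linarith)]; simp
    · rw [max_eq_left h, max_eq_left (by linarith), abs_of_nonneg (by linarith)]
  have e2 : |max b b₀ - b₀| = max (b - b₀) 0 := by
    rcases le_total b b₀ with h | h
    · rw [max_eq_right h, max_eq_right (by linarith)]; simp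
    · rw [max_eq_left h, max_eq_left (by linarith), abs_of_nonneg (by linarith)]
  rw [e1, e2] at h2
  have := abs_le.1 h2
  linarith [h1, this.1]

private lemma deriv_nonneg_left {g : ℝ → ℝ} {t₀ d : ℝ} (ht₀ : 0 < t₀)
    (hd : HasDerivAt g d t₀) (hneg : ∀ s ∈ Set.Ico 0 t₀, g s ≤ 0) (h0 : g t₀ = 0) :
    0 ≤ d := by
  have h := (hd.hasDerivWithinAt (s := Set.Iio t₀))
  rw [hasDerivWithinAt_iff_tendsto_slope] at h
  have hdiff : Set.Iio t₀ \ {t₀} = Set.Iio t₀ := by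
    apply Set.diff_singleton_eq_self
    simp
  rw [hdiff] at h
  refine ge_of_tendsto h ?_
  filter_upwards [Ioo_mem_nhdsLT_of_mem (Set.mem_Ioc.2 ⟨ht₀, le_refl t₀⟩),
    self_mem_nhdsWithin] with s hs hs'
  have hg : g s ≤ 0 := hneg s ⟨hs.1.le, hs.2⟩
  rw [slope_def_field, h0, sub_zero]
  have hst : s - t₀ < 0 := by linarith [hs.2]
  exact div_nonneg_of_nonpos hg hst.le

/-- Scalar invariant-region lemma: if `Ψ₁, Ψ₂ : ℝ² → ℝ` are Lipschitz
and non-increasing in each argument separately, `u_l < u_r`, `v_l < v_r`,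
`Ψ₁(u_r,v_l) ≤ 0 ≤ Ψ₂(u_r,v_l)` and `Ψ₂(u_l,v_r) ≤ 0 ≤ Ψ₁(u_l,v_r)`, then any C¹
solution of `u' = Ψ₁(u,v)`, `v' = Ψ₂(u,v)` on `[0,T]` with `u(0) ∈ [u_l,u_r]`,
`v(0) ∈ [v_l,v_r]` satisfies `u(t) ∈ [u_l,u_r]` and `v(t) ∈ [v_l,v_r]` on `[0,T]`. -/
theorem stmt12 (T : ℝ) (hT : 0 ≤ T) (Ψ₁ Ψ₂ : ℝ → ℝ → ℝ) (K : ℝ)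
    (hlip1 : ∀ a b a' b' : ℝ, |Ψ₁ a b - Ψ₁ a' b'| ≤ K * (|a - a'| + |b - b'|))
    (hlip2 : ∀ a b a' b' : ℝ, |Ψ₂ a b - Ψ₂ a' b'| ≤ K * (|a - a'| + |b - b'|))
    (h1u : ∀ b, Antitone (fun a => Ψ₁ a b)) (h1v : ∀ a, Antitone (Ψ₁ a))
    (h2u : ∀ b, Antitone (fun a => Ψ₂ a b)) (h2v : ∀ a, Antitone (Ψ₂ a))
    (u_l u_r v_l v_r : ℝ) (hu_lr : u_l < u_r) (hv_lr : v_l < v_r)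
    (hs1 : Ψ₁ u_r v_l ≤ 0) (hs2 : 0 ≤ Ψ₂ u_r v_l)
    (hs3 : Ψ₂ u_l v_r ≤ 0) (hs4 : 0 ≤ Ψ₁ u_l v_r)
    (u v : ℝ → ℝ)
    (hu : ∀ t ∈ Set.Icc (0:ℝ) T, HasDerivAt u (Ψ₁ (u t) (v t)) t)
    (hv : ∀ t ∈ Set.Icc (0:ℝ) T, HasDerivAt v (Ψ₂ (u t) (v t)) t)
    (hu0 : u 0 ∈ Set.Icc u_l u_r) (hv0 : v 0 ∈ Set.Icc v_l v_r) :
    ∀ t ∈ Set.Icc (0:ℝ) T, u t ∈ Set.Icc u_l u_r ∧ v t ∈ Set.Icc v_l v_r := by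
  have hK : 0 ≤ K := by
    have h := hlip1 0 0 1 0
    norm_num at h
    linarith [abs_nonneg (Ψ₁ 0 0 - Ψ₁ 1 0)]
  set c : ℝ := K + 1 with hc
  have key : ∀ ε : ℝ, 0 < ε → ∀ t ∈ Set.Icc (0:ℝ) T,
      u t ≤ u_r + ε * Real.exp (c * t) ∧ u_l - ε * Real.exp (c * t) ≤ u t ∧
      v t ≤ v_r + ε * Real.exp (c * t) ∧ v_l - ε * Real.exp (c * t) ≤ v t := by
    intro ε hε
    set E : ℝ → ℝ := fun t => ε * Real.exp (c * t) with hEdef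
    have hEpos : ∀ t, 0 < E t := fun t => mul_pos hε (Real.exp_pos _)
    have hEderiv : ∀ s : ℝ, HasDerivAt E (c * E s) s := by
      intro s
      have h1 : HasDerivAt (fun t : ℝ => c * t) c s := by
        simpa using (hasDerivAt_id s).const_mul c
      have h3 := (h1.exp).const_mul ε
      exact h3.congr_deriv (by simp only [hEdef]; ring)
    have hcontE : Continuous E := by
      rw [hEdef]; fun_prop
    set B : Set ℝ := {t | t ∈ Set.Icc (0:ℝ) T ∧
      (u_r + E t ≤ u t ∨ u t ≤ u_l - E t ∨ v_r + E t ≤ v t ∨ v t ≤ v_l - E t)} with hBdef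
    suffices hB : ∀ t ∈ Set.Icc (0:ℝ) T, t ∉ B by
      intro t ht
      have h := hB t ht
      simp only [hBdef, Set.mem_setOf_eq, ht, true_and, not_or, not_le] at h
      exact ⟨h.1.le, h.2.1.le, h.2.2.1.le, h.2.2.2.le⟩
    by_contra hBex
    push_neg at hBex
    obtain ⟨b₀, hb₀T, hb₀B⟩ := hBex
    have hBne' : B.Nonempty := ⟨b₀, hb₀B⟩
    have hbdd : BddBelow B := ⟨0, fun t ht => ht.1.1⟩
    set t₀ := sInf B with ht₀def
    have ht₀mem : t₀ ∈ Set.Icc (0:ℝ) T :=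
      ⟨le_csInf hBne' (fun t ht => ht.1.1), le_trans (csInf_le hbdd hb₀B) hb₀B.1.2⟩
    have hcontu : ContinuousAt u t₀ := (hu t₀ ht₀mem).continuousAt
    have hcontv : ContinuousAt v t₀ := (hv t₀ ht₀mem).continuousAt
    have hcE : ContinuousAt E t₀ := hcontE.continuousAt
    -- strict inequalities before t₀
    have hA : ∀ s, 0 ≤ s → s < t₀ →
        u s < u_r + E s ∧ u_l - E s < u s ∧ v s < v_r + E s ∧ v_l - E s < v s := by
      intro s hs0 hst
      have hsmem : s ∈ Set.Icc (0:ℝ) T := ⟨hs0, le_trans hst.le ht₀mem.2⟩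
      have hsB : s ∉ B := fun hsB => absurd (csInf_le hbdd hsB) (not_le.2 hst)
      simp only [hBdef, Set.mem_setOf_eq, hsmem, true_and, not_or, not_le] at hsB
      exact hsB
    -- one of the four reversed inequalities holds at t₀
    have hC : u_r + E t₀ ≤ u t₀ ∨ u t₀ ≤ u_l - E t₀ ∨ v_r + E t₀ ≤ v t₀ ∨ v t₀ ≤ v_l - E t₀ := by
      by_contra hcon
      push_neg at hcon
      obtain ⟨h1, h2, h3, h4⟩ := hcon
      set G : ℝ → ℝ := fun s => min (min (u_r + E s - u s) (u s - (u_l - E s)))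
          (min (v_r + E s - v s) (v s - (v_l - E s))) with hGdef
      have hGcont : ContinuousAt G t₀ :=
        ((((continuousAt_const.add hcE).sub hcontu).min
            (hcontu.sub (continuousAt_const.sub hcE))).min
          (((continuousAt_const.add hcE).sub hcontv).min
            (hcontv.sub (continuousAt_const.sub hcE))))
      have hGpos : 0 < G t₀ := by
        simp only [hGdef, lt_min_iff]
        exact ⟨⟨by linarith, by linarith⟩, ⟨by linarith, by linarith⟩⟩
      have hev : ∀ᶠ s in nhds t₀, 0 < G s := hGcont.eventually (eventually_gt_nhds hGpos)
      rw [Metric.eventually_nhds_iff] at hev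
      obtain ⟨δ, hδ, hball⟩ := hev
      have hlt : sInf B < t₀ + δ := by rw [← ht₀def]; linarith
      obtain ⟨b, hbB, hbδ⟩ := exists_lt_of_csInf_lt hBne' hlt
      have hbt₀ : t₀ ≤ b := csInf_le hbdd hbB
      have hGb : 0 < G b := by
        apply hball
        rw [Real.dist_eq, abs_lt]
        constructor <;> linarith
      simp only [hGdef, lt_min_iff] at hGb
      rcases hbB.2 with h | h | h | h
      · linarith [hGb.1.1]
      · linarith [hGb.1.2]
      · linarith [hGb.2.1]
      · linarith [hGb.2.2]
    -- t₀ is positive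
    have ht₀pos : 0 < t₀ := by
      rcases lt_or_eq_of_le ht₀mem.1 with h | h
      · exact h
      · exfalso
        have hE0 : E 0 = ε := by simp [hEdef]
        rw [← h, hE0] at hC
        rcases hC with h' | h' | h' | h' <;>
          linarith [hu0.1, hu0.2, hv0.1, hv0.2]
    -- weak inequalities at t₀ by continuity from the left
    have left_le : ∀ f : ℝ → ℝ, ContinuousAt f t₀ →
        (∀ s ∈ Set.Ico 0 t₀, f s ≤ 0) → f t₀ ≤ 0 := by
      intro f hf hle
      have htend : Filter.Tendsto f (nhdsWithin t₀ (Set.Iio t₀)) (nhds (f t₀)) :=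
        hf.continuousWithinAt.tendsto
      refine le_of_tendsto htend ?_
      filter_upwards [Ioo_mem_nhdsLT_of_mem (Set.mem_Ioc.2 ⟨ht₀pos, le_refl t₀⟩)] with s hs
      exact hle s ⟨hs.1.le, hs.2⟩
    have hwu1 : u t₀ ≤ u_r + E t₀ := by
      have := left_le (fun s => u s - (u_r + E s))
        (hcontu.sub (continuousAt_const.add hcE))
        (fun s hs => by have := (hA s hs.1 hs.2).1; linarith)
      linarith
    have hwu2 : u_l - E t₀ ≤ u t₀ := by
      have := left_le (fun s => (u_l - E s) - u s)
        ((continuousAt_const.sub hcE).sub hcontu)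
        (fun s hs => by have := (hA s hs.1 hs.2).2.1; linarith)
      linarith
    have hwv1 : v t₀ ≤ v_r + E t₀ := by
      have := left_le (fun s => v s - (v_r + E s))
        (hcontv.sub (continuousAt_const.add hcE))
        (fun s hs => by have := (hA s hs.1 hs.2).2.2.1; linarith)
      linarith
    have hwv2 : v_l - E t₀ ≤ v t₀ := by
      have := left_le (fun s => (v_l - E s) - v s)
        ((continuousAt_const.sub hcE).sub hcontv)
        (fun s hs => by have := (hA s hs.1 hs.2).2.2.2; linarith)
      linarith
    have hEt₀pos := hEpos t₀
    have hce : c * E t₀ = K * E t₀ + E t₀ := by rw [hc]; ring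
    rcases hC with hcase | hcase | hcase | hcase
    · -- u hits the upper barrier
      have heq : u t₀ = u_r + E t₀ := le_antisymm hwu1 hcase
      have hg : HasDerivAt (fun s => u s - (u_r + E s)) (Ψ₁ (u t₀) (v t₀) - c * E t₀) t₀ := by
        exact ((hu t₀ ht₀mem).sub ((hasDerivAt_const t₀ u_r).add (hEderiv t₀))).congr_deriv (by ring)
      have hd0 : 0 ≤ Ψ₁ (u t₀) (v t₀) - c * E t₀ :=
        deriv_nonneg_left ht₀pos hg
          (fun s hs => by have := (hA s hs.1 hs.2).1; show u s - (u_r + E s) ≤ 0; linarith)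
          (by show u t₀ - (u_r + E t₀) = 0; rw [heq]; ring)
      have hup := psi_upper hlip1 h1u h1v (u t₀) (v t₀) u_r v_l
      have hm1 : max (u_r - u t₀) 0 = 0 := max_eq_right (by linarith)
      have hm2 : max (v_l - v t₀) 0 ≤ E t₀ := max_le (by linarith) hEt₀pos.le
      rw [hm1] at hup
      nlinarith [mul_le_mul_of_nonneg_left hm2 hK]
    · -- u hits the lower barrier
      have heq : u t₀ = u_l - E t₀ := le_antisymm hcase hwu2
      have hg : HasDerivAt (fun s => (u_l - E s) - u s) (-(c * E t₀) - Ψ₁ (u t₀) (v t₀)) t₀ := by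
        exact (((hasDerivAt_const t₀ u_l).sub (hEderiv t₀)).sub (hu t₀ ht₀mem)).congr_deriv (by ring)
      have hd0 : 0 ≤ -(c * E t₀) - Ψ₁ (u t₀) (v t₀) :=
        deriv_nonneg_left ht₀pos hg
          (fun s hs => by have := (hA s hs.1 hs.2).2.1; show (u_l - E s) - u s ≤ 0; linarith)
          (by show (u_l - E t₀) - u t₀ = 0; rw [heq]; ring)
      have hlo := psi_lower hlip1 h1u h1v (u t₀) (v t₀) u_l v_r
      have hm1 : max (u t₀ - u_l) 0 = 0 := max_eq_right (by linarith)
      have hm2 : max (v t₀ - v_r) 0 ≤ E t₀ := max_le (by linarith) hEt₀pos.le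
      rw [hm1] at hlo
      nlinarith [mul_le_mul_of_nonneg_left hm2 hK]
    · -- v hits the upper barrier
      have heq : v t₀ = v_r + E t₀ := le_antisymm hwv1 hcase
      have hg : HasDerivAt (fun s => v s - (v_r + E s)) (Ψ₂ (u t₀) (v t₀) - c * E t₀) t₀ := by
        exact ((hv t₀ ht₀mem).sub ((hasDerivAt_const t₀ v_r).add (hEderiv t₀))).congr_deriv (by ring)
      have hd0 : 0 ≤ Ψ₂ (u t₀) (v t₀) - c * E t₀ :=
        deriv_nonneg_left ht₀pos hg
          (fun s hs => by have := (hA s hs.1 hs.2).2.2.1; show v s - (v_r + E s) ≤ 0; linarith)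
          (by show v t₀ - (v_r + E t₀) = 0; rw [heq]; ring)
      have hup := psi_upper hlip2 h2u h2v (u t₀) (v t₀) u_l v_r
      have hm1 : max (v_r - v t₀) 0 = 0 := max_eq_right (by linarith)
      have hm2 : max (u_l - u t₀) 0 ≤ E t₀ := max_le (by linarith) hEt₀pos.le
      rw [hm1] at hup
      nlinarith [mul_le_mul_of_nonneg_left hm2 hK]
    · -- v hits the lower barrier
      have heq : v t₀ = v_l - E t₀ := le_antisymm hcase hwv2
      have hg : HasDerivAt (fun s => (v_l - E s) - v s) (-(c * E t₀) - Ψ₂ (u t₀) (v t₀)) t₀ := by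
        exact (((hasDerivAt_const t₀ v_l).sub (hEderiv t₀)).sub (hv t₀ ht₀mem)).congr_deriv (by ring)
      have hd0 : 0 ≤ -(c * E t₀) - Ψ₂ (u t₀) (v t₀) :=
        deriv_nonneg_left ht₀pos hg
          (fun s hs => by have := (hA s hs.1 hs.2).2.2.2; show (v_l - E s) - v s ≤ 0; linarith)
          (by show (v_l - E t₀) - v t₀ = 0; rw [heq]; ring)
      have hlo := psi_lower hlip2 h2u h2v (u t₀) (v t₀) u_r v_l
      have hm1 : max (v t₀ - v_l) 0 = 0 := max_eq_right (by linarith)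
      have hm2 : max (u t₀ - u_r) 0 ≤ E t₀ := max_le (by linarith) hEt₀pos.le
      rw [hm1] at hlo
      nlinarith [mul_le_mul_of_nonneg_left hm2 hK]
  -- pass to the limit ε → 0
  intro t ht
  have hexp : (0:ℝ) < Real.exp (c * t) := Real.exp_pos _
  have bound : ∀ x y : ℝ, (∀ ε : ℝ, 0 < ε → x ≤ y + ε * Real.exp (c * t)) → x ≤ y := by
    intro x y h
    by_contra hcon
    push_neg at hcon
    have h2 := h ((x - y) / (2 * Real.exp (c * t)))
      (div_pos (by linarith) (by linarith))
    have hmul : (x - y) / (2 * Real.exp (c * t)) * Real.exp (c * t) = (x - y) / 2 := by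
      field_simp
    rw [hmul] at h2
    linarith
  refine ⟨⟨?_, ?_⟩, ?_, ?_⟩
  · exact bound u_l (u t) (fun ε hε => by linarith [(key ε hε t ht).2.1])
  · exact bound (u t) u_r (fun ε hε => (key ε hε t ht).1)
  · exact bound v_l (v t) (fun ε hε => by linarith [(key ε hε t ht).2.2.2])
  · exact bound (v t) v_r (fun ε hε => (key ε hε t ht).2.2.1)
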